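/- Let X be a finite T0 topological space. Then for every subset A ⊆ X, the interior of the closure of A is contained in the closure of the interior of A, i.e. int(cl(A)) ⊆ cl(int(A)). Consequently, every preopen subset of X (a set A with A ⊆ int(cl(A))) is semi-open (satisfies A ⊆ cl(int(A))). -/

import Mathlib

/-- In a finite T0 space every nonempty open set contains an open singleton. -/
lemma exists_open_singleton_of_isOpen {X : Type*} [TopologicalSpace X] [Finite X] [T0Space X]
    {U : Set X} (hU : IsOpen U) (hne : U.Nonempty) : ∃ y ∈ U, IsOpen ({y} : Set X) := by
  obtain ⟨y, hyU, hmin⟩ :=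
    U.toFinite.exists_minimalFor (fun y : X => nhdsKer {y}) U hne
  refine ⟨y, hyU, ?_⟩
  have hsub : nhdsKer ({y} : Set X) ⊆ {y} := by
    intro a ha
    have haU : a ∈ U := nhdsKer_minimal (Set.singleton_subset_iff.2 hyU) hU ha
    have h1 : nhdsKer ({a} : Set X) ⊆ nhdsKer ({y} : Set X) :=
      nhdsKer_minimal (Set.singleton_subset_iff.2 ha) isOpen_nhdsKer
    have heq : nhdsKer ({y} : Set X) = nhdsKer ({a} : Set X) := Set.Subset.antisymm (hmin haU h1) h1
    have h2 : a ⤳ y := mem_nhdsKer_singleton.1 ha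
    have h3 : y ⤳ a := mem_nhdsKer_singleton.1 (heq ▸ subset_nhdsKer rfl)
    exact ((h3.antisymm h2).eq).symm
  have : nhdsKer ({y} : Set X) = {y} :=
    Set.Subset.antisymm hsub subset_nhdsKer
  exact this ▸ isOpen_nhdsKer

/-- In a finite T0 space, `int (cl A) ⊆ cl (int A)` for every subset `A`;
consequently every preopen set is semi-open. -/
theorem interior_closure_subset_closure_interior
    (X : Type*) [TopologicalSpace X] [Finite X] [T0Space X] :
    (∀ A : Set X, interior (closure A) ⊆ closure (interior A)) ∧
      (∀ A : Set X, A ⊆ interior (closure A) → A ⊆ closure (interior A)) := by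
  have main : ∀ A : Set X, interior (closure A) ⊆ closure (interior A) := by
    intro A x hx
    rw [mem_closure_iff]
    intro V hV hxV
    obtain ⟨y, hy, hyo⟩ := exists_open_singleton_of_isOpen
      (hV.inter isOpen_interior) ⟨x, hxV, hx⟩
    have hyA : y ∈ A := by
      have := hy.2
      have hcl : y ∈ closure A := interior_subset this
      obtain ⟨z, hz1, hz2⟩ := (mem_closure_iff.1 hcl) {y} hyo rfl
      rwa [Set.mem_singleton_iff.1 hz1] at hz2
    have : y ∈ interior A :=
      interior_maximal (Set.singleton_subset_iff.2 hyA) hyo rfl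
    exact ⟨y, hy.1, this⟩
  exact ⟨main, fun A hA => (hA.trans (main A))⟩
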